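/- Let A ∈ ℝ^{d×d} be symmetric and invertible, and let B ∈ ℝ^{d×d} be symmetric positive semidefinite with rank(B) ≥ r (so T_B ≠ ∅). Then the problem min over X ∈ T_B of −tr(Xᵀ A X) admits a minimizer (i.e. the infimum is attained) if and only if for every v ∈ ℝ^d with B v = 0, either vᵀ A v < 0, or (vᵀ A v = 0 and uᵀ A v = 0 for every u in the column space of B). -/

import Mathlib

open Matrix

lemma symm_dot {d : ℕ} {M : Matrix (Fin d) (Fin d) ℝ} (hM : Mᵀ = M) (a b : Fin d → ℝ) :
    a ⬝ᵥ (M *ᵥ b) = b ⬝ᵥ (M *ᵥ a) := by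
  rw [dotProduct_mulVec, ← mulVec_transpose, hM, dotProduct_comm]

lemma zero_dot_left {d : ℕ} {B : Matrix (Fin d) (Fin d) ℝ} (hB : Bᵀ = B) {v : Fin d → ℝ}
    (hv : B *ᵥ v = 0) (x : Fin d → ℝ) : v ⬝ᵥ (B *ᵥ x) = 0 := by
  rw [symm_dot hB, hv, dotProduct_zero]

lemma entry_form {d r : ℕ} (M : Matrix (Fin d) (Fin d) ℝ) (X : Matrix (Fin d) (Fin r) ℝ) (i j : Fin r) :
    (Xᵀ * M * X) i j = (fun k => X k i) ⬝ᵥ (M *ᵥ fun k => X k j) := by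
  simp only [Matrix.mul_apply, dotProduct, mulVec, transpose_apply, Finset.sum_mul, Finset.mul_sum]
  rw [Finset.sum_comm]
  apply Finset.sum_congr rfl; intros; apply Finset.sum_congr rfl; intros; ring

lemma trace_form {d r : ℕ} (M : Matrix (Fin d) (Fin d) ℝ) (X : Matrix (Fin d) (Fin r) ℝ) :
    (Xᵀ * M * X).trace = ∑ j, (fun k => X k j) ⬝ᵥ (M *ᵥ fun k => X k j) := by
  simp [Matrix.trace, Matrix.diag, entry_form]

lemma quad_nonpos {q c : ℝ} (h : ∀ t : ℝ, t^2 * q + t * c ≤ 0) : q ≤ 0 ∧ c = 0 := by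
  have hq : q ≤ 0 := by
    by_contra hq
    push_neg at hq
    have ht := h ((|c| + 1)/q)
    have h1 : (|c| + 1)/q > 0 := by positivity
    have h2 : (|c| + 1)/q * q = |c| + 1 := div_mul_cancel₀ _ (ne_of_gt hq)
    nlinarith [abs_nonneg c, le_abs_self c, neg_abs_le c]
  refine ⟨hq, ?_⟩
  rcases eq_or_lt_of_le hq with hq0 | hq0
  · have h1 := h c
    have h2 := h (-c)
    nlinarith
  · have h1 := h (-c/(2*q))
    have h2 : q ≠ 0 := ne_of_lt hq0
    have h3 : (-c/(2*q))^2 * q + (-c/(2*q)) * c = -c^2/(4*q) := by field_simp; ring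
    rw [h3] at h1
    have h4 : c^2 ≤ 0 := by
      rw [div_le_iff_of_neg (by linarith : (4:ℝ)*q < 0)] at h1 <;> nlinarith
    nlinarith [sq_nonneg c]


lemma young_dot {d : ℕ} (c : ℝ) (hc : 0 < c) (w z : Fin d → ℝ) :
    2 * (w ⬝ᵥ z) ≤ (2/c) * (w ⬝ᵥ w) + (c/2) * (z ⬝ᵥ z) := by
  have key : ∀ i : Fin d, 2 * (w i * z i) ≤ (2/c) * (w i * w i) + (c/2) * (z i * z i) := by
    intro i
    rw [← mul_le_mul_iff_right₀ hc]
    have h2c : c * (2/c) = 2 := by field_simp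
    calc c * (2 * (w i * z i)) = 2 * c * (w i * z i) := by ring
      _ ≤ 2 * (w i)^2 + (c^2/2) * (z i)^2 := by nlinarith [sq_nonneg (w i - (c/2) * z i)]
      _ = c * ((2/c) * (w i * w i) + (c/2) * (z i * z i)) := by field_simp
  calc 2 * (w ⬝ᵥ z) = ∑ i, 2 * (w i * z i) := by simp [dotProduct, Finset.mul_sum]
    _ ≤ ∑ i, ((2/c) * (w i * w i) + (c/2) * (z i * z i)) := Finset.sum_le_sum fun i _ => key i
    _ = (2/c) * (w ⬝ᵥ w) + (c/2) * (z ⬝ᵥ z) := by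
        rw [Finset.sum_add_distrib]; simp [dotProduct, Finset.mul_sum]

lemma sq_le_dot {d : ℕ} (v : Fin d → ℝ) (i : Fin d) : (v i)^2 ≤ v ⬝ᵥ v := by
  have : (fun k => (v k)^2) i ≤ ∑ k, (v k)^2 :=
    Finset.single_le_sum (fun k _ => sq_nonneg (v k)) (Finset.mem_univ i)
  simpa [dotProduct, sq] using this

lemma exists_upper {d : ℕ} (M : Matrix (Fin d) (Fin d) ℝ) :
    ∃ m : ℝ, 0 ≤ m ∧ ∀ v : Fin d → ℝ, v ⬝ᵥ (M *ᵥ v) ≤ m * (v ⬝ᵥ v) := by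
  refine ⟨∑ i, ∑ j, |M i j|, by positivity, fun v => ?_⟩
  have habs : ∀ i j : Fin d, |v i * v j| ≤ v ⬝ᵥ v := by
    intro i j
    have h1 := sq_le_dot v i
    have h2 := sq_le_dot v j
    rw [abs_le]
    constructor <;> nlinarith [sq_nonneg (v i - v j), sq_nonneg (v i + v j)]
  calc v ⬝ᵥ (M *ᵥ v) = ∑ i, ∑ j, v i * (M i j * v j) := by
        simp [dotProduct, mulVec, Finset.mul_sum]
    _ ≤ ∑ i, ∑ j, |M i j| * (v ⬝ᵥ v) := by
        refine Finset.sum_le_sum fun i _ => Finset.sum_le_sum fun j _ => ?_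
        refine le_trans (le_abs_self _) ?_
        calc |v i * (M i j * v j)| = |M i j| * |v i * v j| := by
              rw [abs_mul, abs_mul, abs_mul]; ring
          _ ≤ |M i j| * (v ⬝ᵥ v) := mul_le_mul_of_nonneg_left (habs i j) (abs_nonneg _)
    _ = (∑ i, ∑ j, |M i j|) * (v ⬝ᵥ v) := by rw [Finset.sum_mul]; simp [Finset.sum_mul]


lemma cont_quad {d : ℕ} (M : Matrix (Fin d) (Fin d) ℝ) :
    Continuous fun v : Fin d → ℝ => v ⬝ᵥ (M *ᵥ v) := by
  unfold dotProduct mulVec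
  exact continuous_finset_sum _ fun i _ => (continuous_apply i).mul
    (continuous_finset_sum _ fun j _ => continuous_const.mul (continuous_apply j))

lemma dot_self_pos {d : ℕ} {v : Fin d → ℝ} (hv : v ≠ 0) : 0 < v ⬝ᵥ v := by
  have hnn : 0 ≤ v ⬝ᵥ v := Finset.sum_nonneg fun i _ => mul_self_nonneg (v i)
  rcases lt_or_eq_of_le hnn with h | h
  · exact h
  · exact absurd (dotProduct_self_eq_zero.mp h.symm) hv

lemma equiv_symm_zero' (p : ENNReal) {V : Type*} [AddCommGroup V] :
    (WithLp.equiv p V).symm 0 = 0 := rfl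

lemma equiv_zero' (p : ENNReal) {V : Type*} [AddCommGroup V] :
    WithLp.equiv p V 0 = 0 := rfl

lemma euclid_norm_sq {d : ℕ} (v : Fin d → ℝ) :
    ‖(WithLp.equiv 2 (Fin d → ℝ)).symm v‖ ^ 2 = v ⬝ᵥ v := by
  rw [EuclideanSpace.norm_eq]
  rw [Real.sq_sqrt (by positivity)]
  simp [dotProduct, sq]

lemma exists_pos_lower {d : ℕ} (S : Submodule ℝ (Fin d → ℝ)) (M : Matrix (Fin d) (Fin d) ℝ)
    (h : ∀ v ∈ S, v ≠ 0 → 0 < v ⬝ᵥ (M *ᵥ v)) :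
    ∃ c : ℝ, 0 < c ∧ ∀ v ∈ S, c * (v ⬝ᵥ v) ≤ v ⬝ᵥ (M *ᵥ v) := by
  by_cases hS : ∀ v ∈ S, v = 0
  · exact ⟨1, one_pos, fun v hv => by simp [hS v hv]⟩
  push_neg at hS
  obtain ⟨v₀, hv₀S, hv₀⟩ := hS
  set E := EuclideanSpace ℝ (Fin d)
  set e : E ≃ (Fin d → ℝ) := WithLp.equiv 2 (Fin d → ℝ) with he
  have hecont : Continuous e := PiLp.continuous_ofLp 2 (fun _ : Fin d => ℝ)
  have hlin : ∀ (c : ℝ) (x : Fin d → ℝ), e (c • e.symm x) = c • x := by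
    intro c x; rw [WithLp.equiv_apply, WithLp.ofLp_smul, ← WithLp.equiv_apply, Equiv.apply_symm_apply]
  set φ : E → ℝ := fun u => (e u) ⬝ᵥ (M *ᵥ e u) with hφ
  have hφcont : Continuous φ := (cont_quad M).comp hecont
  set Sph : Set E := {u : E | e u ∈ S} ∩ Metric.sphere 0 1 with hSph
  have hclosed : IsClosed {u : E | e u ∈ S} :=
    IsClosed.preimage hecont (Submodule.closed_of_finiteDimensional S)
  have hcomp : IsCompact Sph := (isCompact_sphere (0:E) 1).inter_left hclosed
  -- nonempty
  have hnorm0 : ‖e.symm v₀‖ ≠ 0 := by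
    rw [Ne, norm_eq_zero]
    intro hcontra
    exact hv₀ (by rw [← Equiv.apply_symm_apply e v₀, hcontra, ← equiv_symm_zero' 2,
      Equiv.apply_symm_apply])
  set u₀ : E := ‖e.symm v₀‖⁻¹ • e.symm v₀ with hu₀
  have hu₀Sph : u₀ ∈ Sph := by
    constructor
    · show e u₀ ∈ S
      rw [hu₀, hlin]
      exact S.smul_mem _ hv₀S
    · simp only [Metric.mem_sphere, dist_zero_right, hu₀, norm_smul, norm_inv, norm_norm]
      field_simp
      exact (Real.norm_of_nonneg (norm_nonneg _)).symm
  obtain ⟨ustar, hustar, hmin⟩ := hcomp.exists_isMinOn ⟨u₀, hu₀Sph⟩ hφcont.continuousOn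
  obtain ⟨hustarS, hustarN⟩ := hustar
  have hustarne : e ustar ≠ 0 := by
    intro hc
    have : ustar = 0 := by
      have := congrArg e.symm hc
      rwa [Equiv.symm_apply_apply, equiv_symm_zero' 2] at this
    rw [this] at hustarN
    simp at hustarN
  refine ⟨φ ustar, h _ hustarS hustarne, fun v hvS => ?_⟩
  by_cases hv : v = 0
  · simp [hv]
  · set t : ℝ := ‖e.symm v‖⁻¹ with ht
    have htpos : 0 < t := by
      rw [ht]
      have hne : ‖e.symm v‖ ≠ 0 := by
        rw [Ne, norm_eq_zero]
        intro hcontra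
        exact hv (by rw [← Equiv.apply_symm_apply e v, hcontra, equiv_zero' 2])
      exact inv_pos.mpr (lt_of_le_of_ne (norm_nonneg _) (Ne.symm hne))
    set u : E := t • e.symm v with hu
    have huSph : u ∈ Sph := by
      constructor
      · show e u ∈ S
        rw [hu, hlin]; exact S.smul_mem _ hvS
      · have hne : ‖e.symm v‖ ≠ 0 := by
          rw [Ne, norm_eq_zero]
          intro hcontra
          exact hv (by rw [← Equiv.apply_symm_apply e v, hcontra, equiv_zero' 2])
        simp only [Metric.mem_sphere, dist_zero_right, hu, norm_smul, ht, norm_inv, norm_norm]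
        rw [Real.norm_of_nonneg (norm_nonneg _)]
        exact inv_mul_cancel₀ hne
    have hle : φ ustar ≤ φ u := hmin huSph
    have hφu : φ u = t^2 * (v ⬝ᵥ (M *ᵥ v)) := by
      rw [hφ]
      simp only [hu, hlin, smul_dotProduct, mulVec_smul, dotProduct_smul, smul_eq_mul]
      ring
    have ht2 : t^2 * (v ⬝ᵥ v) = 1 := by
      rw [ht, ← euclid_norm_sq v]
      have hne : ‖e.symm v‖ ≠ 0 := by
        rw [Ne, norm_eq_zero]
        intro hcontra
        exact hv (by rw [← Equiv.apply_symm_apply e v, hcontra, equiv_zero' 2])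
      field_simp
      rfl
    have hdv : 0 < v ⬝ᵥ v := dot_self_pos hv
    rw [hφu] at hle
    -- from φ ustar ≤ t² q and t² (v⬝ᵥv) = 1 conclude
    have h1 : φ ustar * (v ⬝ᵥ v) ≤ t^2 * (v ⬝ᵥ (M *ᵥ v)) * (v ⬝ᵥ v) :=
      mul_le_mul_of_nonneg_right hle (le_of_lt hdv)
    calc φ ustar * (v ⬝ᵥ v) ≤ t^2 * (v ⬝ᵥ (M *ᵥ v)) * (v ⬝ᵥ v) := h1
      _ = (t^2 * (v ⬝ᵥ v)) * (v ⬝ᵥ (M *ᵥ v)) := by ring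
      _ = v ⬝ᵥ (M *ᵥ v) := by rw [ht2, one_mul]

lemma range_ker_decomp {d : ℕ} {B : Matrix (Fin d) (Fin d) ℝ} (hBs : Bᵀ = B) (x : Fin d → ℝ) :
    ∃ y z : Fin d → ℝ, (∃ w, B *ᵥ w = y) ∧ B *ᵥ z = 0 ∧ x = y + z := by
  set R := LinearMap.range B.mulVecLin with hR
  set K := LinearMap.ker B.mulVecLin with hK
  have hdisj : R ⊓ K = ⊥ := by
    rw [Submodule.eq_bot_iff]
    rintro v ⟨hvR, hvK⟩
    obtain ⟨w, hw⟩ := hvR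
    have hv0 : B *ᵥ v = 0 := hvK
    have : v ⬝ᵥ v = 0 := by
      have hw' : B *ᵥ w = v := hw
      calc v ⬝ᵥ v = v ⬝ᵥ (B *ᵥ w) := by rw [hw']
        _ = w ⬝ᵥ (B *ᵥ v) := symm_dot hBs v w
        _ = 0 := by rw [hv0, dotProduct_zero]
    exact dotProduct_self_eq_zero.mp this
  have hsum := LinearMap.finrank_range_add_finrank_ker B.mulVecLin
  have hsup : R ⊔ K = ⊤ := by
    apply Submodule.eq_top_of_finrank_eq
    have h2 := Submodule.finrank_sup_add_finrank_inf_eq R K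
    rw [hdisj] at h2
    simp only [finrank_bot, add_zero] at h2
    rw [h2, hsum]
  have hx : x ∈ R ⊔ K := by rw [hsup]; trivial
  obtain ⟨y, hy, z, hz, hyz⟩ := Submodule.mem_sup.mp hx
  exact ⟨y, z, hy, hz, hyz.symm⟩

open scoped MatrixOrder in
lemma exists_feasible {d r : ℕ} {B : Matrix (Fin d) (Fin d) ℝ}
    (hB : B.PosSemidef) (hrank : r ≤ B.rank) :
    ∃ X : Matrix (Fin d) (Fin r) ℝ, Xᵀ * B * X = 1 := by
  set S := CFC.sqrt B with hSdef
  have hSpsd : S.PosSemidef := (CFC.sqrt_nonneg B).posSemidef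
  have hSs : Sᵀ = S := by simpa [Matrix.IsHermitian] using hSpsd.1
  have hSS : S * S = B := CFC.sqrt_mul_sqrt_self B hB.nonneg
  have hrkS : r ≤ S.rank := by
    refine le_trans hrank ?_
    calc B.rank = (S * S).rank := by rw [hSS]
      _ ≤ S.rank := Matrix.rank_mul_le_left S S
  set E := EuclideanSpace ℝ (Fin d)
  set eL : E ≃ₗ[ℝ] (Fin d → ℝ) := WithLp.linearEquiv 2 ℝ (Fin d → ℝ) with heL
  set V : Submodule ℝ E := (LinearMap.range S.mulVecLin).map (eL.symm : (Fin d → ℝ) →ₗ[ℝ] E) with hV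
  have hfr : Module.finrank ℝ V = S.rank := by
    rw [hV, Matrix.rank]
    exact LinearEquiv.finrank_map_eq eL.symm _
  have hrV : r ≤ Module.finrank ℝ V := by rw [hfr]; exact hrkS
  set b := stdOrthonormalBasis ℝ V with hb
  have hx : ∀ j : Fin r, ∃ x : Fin d → ℝ,
      S *ᵥ x = eL ((b ⟨j.1, lt_of_lt_of_le j.2 hrV⟩ : V) : E) := by
    intro j
    have hmem : ((b ⟨j.1, lt_of_lt_of_le j.2 hrV⟩ : V) : E) ∈
        (LinearMap.range S.mulVecLin).map (eL.symm : (Fin d → ℝ) →ₗ[ℝ] E) := Submodule.coe_mem _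
    obtain ⟨y, hy, hy2⟩ := Submodule.mem_map.mp hmem
    obtain ⟨x, hx⟩ := hy
    refine ⟨x, ?_⟩
    have : y = eL ((b ⟨j.1, lt_of_lt_of_le j.2 hrV⟩ : V) : E) := by
      rw [← hy2, LinearEquiv.coe_coe, LinearEquiv.apply_symm_apply]
    rw [← this, ← hx]
    rfl
  choose x hxs using hx
  refine ⟨Matrix.of fun i j => x j i, ?_⟩
  ext i j
  rw [entry_form]
  have hcol : ∀ m : Fin r, (fun k => (Matrix.of fun i j => x j i) k m) = x m := by
    intro m; funext k; rfl
  rw [hcol, hcol]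
  have key : (x i) ⬝ᵥ (B *ᵥ x j) = (S *ᵥ x i) ⬝ᵥ (S *ᵥ x j) := by
    rw [← hSS, ← Matrix.mulVec_mulVec, dotProduct_mulVec, ← mulVec_transpose, hSs, dotProduct_comm,
      dotProduct_mulVec, ← mulVec_transpose, hSs, dotProduct_comm]
  rw [key, hxs i, hxs j]
  have horth := orthonormal_iff_ite.mp b.orthonormal
    (⟨i.1, lt_of_lt_of_le i.2 hrV⟩) (⟨j.1, lt_of_lt_of_le j.2 hrV⟩)
  have hinner : (eL ((b ⟨i.1, lt_of_lt_of_le i.2 hrV⟩ : V) : E)) ⬝ᵥ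
      (eL ((b ⟨j.1, lt_of_lt_of_le j.2 hrV⟩ : V) : E)) =
      (inner ℝ (b ⟨i.1, lt_of_lt_of_le i.2 hrV⟩) (b ⟨j.1, lt_of_lt_of_le j.2 hrV⟩) : ℝ) := by
    rw [Submodule.coe_inner, PiLp.inner_apply]
    simp [dotProduct, RCLike.inner_apply]
    exact Finset.sum_congr rfl fun _ _ => mul_comm _ _
  rw [hinner, horth]
  have : (⟨i.1, lt_of_lt_of_le i.2 hrV⟩ : Fin (Module.finrank ℝ V)) = ⟨j.1, lt_of_lt_of_le j.2 hrV⟩ ↔ i = j := by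
    constructor
    · intro h; simp only [Fin.mk.injEq] at h; exact Fin.ext h
    · intro h; subst h; rfl
  rw [Matrix.one_apply]
  by_cases hij : i = j
  · simp [hij]
  · have : ¬(⟨i.1, lt_of_lt_of_le i.2 hrV⟩ : Fin (Module.finrank ℝ V)) = ⟨j.1, lt_of_lt_of_le j.2 hrV⟩ := by
      intro h
      simp only [Fin.mk.injEq] at h
      exact hij (Fin.ext h)
    simp [hij, this]

theorem forward_dir {d r : ℕ}
    (hr : 1 ≤ r)
    (A B : Matrix (Fin d) (Fin d) ℝ) (hA : Aᵀ = A)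
    (hBs : Bᵀ = B) (hBpsd : ∀ x : Fin d → ℝ, (0:ℝ) ≤ x ⬝ᵥ (B *ᵥ x))
    (X₀ : Matrix (Fin d) (Fin r) ℝ) (hfeas : X₀ᵀ * B * X₀ = 1)
    (hopt : ∀ X' : Matrix (Fin d) (Fin r) ℝ, X'ᵀ * B * X' = 1 →
      -(X₀ᵀ * A * X₀).trace ≤ -(X'ᵀ * A * X').trace)
    (v : Fin d → ℝ) (hv : B *ᵥ v = 0) :
    (v ⬝ᵥ (A *ᵥ v) < 0 ∨
      (v ⬝ᵥ (A *ᵥ v) = 0 ∧ ∀ w : Fin d → ℝ, (B *ᵥ w) ⬝ᵥ (A *ᵥ v) = 0)) := by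
  set xc : Fin r → (Fin d → ℝ) := fun j k => X₀ k j with hxc
  have hentry : ∀ i j : Fin r, xc i ⬝ᵥ (B *ᵥ xc j) = (1 : Matrix (Fin r) (Fin r) ℝ) i j := by
    intro i j; rw [← hfeas, entry_form]
  have hobj : ∀ X' : Matrix (Fin d) (Fin r) ℝ, X'ᵀ * B * X' = 1 →
      (X'ᵀ * A * X').trace ≤ (X₀ᵀ * A * X₀).trace := by
    intro X' h
    have := hopt X' h
    linarith
  have hBvr : ∀ x : Fin d → ℝ, x ⬝ᵥ (B *ᵥ v) = 0 := fun x => by rw [hv, dotProduct_zero]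
  have hBvl : ∀ x : Fin d → ℝ, v ⬝ᵥ (B *ᵥ x) = 0 := zero_dot_left hBs hv
  -- generic perturbation: replace column j of X₀ by a vector y with suitable properties
  have key : ∀ (j : Fin r) (y : Fin d → ℝ),
      (∀ m : Fin r, m ≠ j → y ⬝ᵥ (B *ᵥ xc m) = 0) → (y ⬝ᵥ (B *ᵥ y) = 1) →
      ∑ m, xc m ⬝ᵥ (A *ᵥ xc m) - xc j ⬝ᵥ (A *ᵥ xc j) + y ⬝ᵥ (A *ᵥ y)
        ≤ ∑ m, xc m ⬝ᵥ (A *ᵥ xc m) := by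
    intro j y hyo hyn
    set X' := X₀.updateCol j y with hX'
    have hcolj : (fun k => X' k j) = y := by
      funext k; rw [hX', Matrix.updateCol_apply, if_pos rfl]
    have hcolne : ∀ m : Fin r, m ≠ j → (fun k => X' k m) = xc m := by
      intro m hm; funext k; rw [hX', Matrix.updateCol_apply, if_neg hm]
    have hfeas' : X'ᵀ * B * X' = 1 := by
      ext i m
      rw [entry_form]
      by_cases him : i = j <;> by_cases hmj : m = j
      · subst him; subst hmj
        rw [hcolj, hyn, Matrix.one_apply_eq]
      · subst him
        rw [hcolj, hcolne m hmj, hyo m hmj, Matrix.one_apply_ne (by exact fun hc => hmj hc.symm)]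
      · subst hmj
        rw [hcolj, hcolne i him, symm_dot hBs, hyo i him, Matrix.one_apply_ne him]
      · rw [hcolne i him, hcolne m hmj]
        exact hentry i m
    have := hobj X' hfeas'
    rw [trace_form A X', trace_form A X₀] at this
    have hsum' : ∑ m, (fun k => X' k m) ⬝ᵥ (A *ᵥ fun k => X' k m)
        = ∑ m ∈ Finset.univ.erase j, xc m ⬝ᵥ (A *ᵥ xc m) + y ⬝ᵥ (A *ᵥ y) := by
      rw [← Finset.sum_erase_add _ _ (Finset.mem_univ j)]
      congr 1
      · apply Finset.sum_congr rfl
        intro m hm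
        have hmj := Finset.ne_of_mem_erase hm
        rw [hcolne m hmj]
      · rw [hcolj]
    have hsum0 : ∑ m, (fun k => X₀ k m) ⬝ᵥ (A *ᵥ fun k => X₀ k m)
        = ∑ m ∈ Finset.univ.erase j, xc m ⬝ᵥ (A *ᵥ xc m) + xc j ⬝ᵥ (A *ᵥ xc j) := by
      rw [← Finset.sum_erase_add _ _ (Finset.mem_univ j)]
    rw [hsum', hsum0] at this
    have hsplit : ∑ m, xc m ⬝ᵥ (A *ᵥ xc m)
        = ∑ m ∈ Finset.univ.erase j, xc m ⬝ᵥ (A *ᵥ xc m) + xc j ⬝ᵥ (A *ᵥ xc j) :=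
      (Finset.sum_erase_add _ _ (Finset.mem_univ j)).symm
    rw [hsplit]
    linarith
  -- step 1 : per-column coefficients vanish and q ≤ 0
  have hpert : (v ⬝ᵥ (A *ᵥ v)) ≤ 0 ∧ ∀ j : Fin r, (xc j ⬝ᵥ (A *ᵥ v)) = 0 := by
    have hj : ∀ j : Fin r, (v ⬝ᵥ (A *ᵥ v)) ≤ 0 ∧ 2 * (xc j ⬝ᵥ (A *ᵥ v)) = 0 := by
      intro j
      apply quad_nonpos
      intro t
      have hkey := key j (xc j + t • v) ?_ ?_
      · have hexp : (xc j + t • v) ⬝ᵥ (A *ᵥ (xc j + t • v))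
            = xc j ⬝ᵥ (A *ᵥ xc j) + t^2 * (v ⬝ᵥ (A *ᵥ v)) + t * (2 * (xc j ⬝ᵥ (A *ᵥ v))) := by
          have hsymA : v ⬝ᵥ (A *ᵥ xc j) = xc j ⬝ᵥ (A *ᵥ v) := symm_dot hA v (xc j)
          simp only [mulVec_add, mulVec_smul, dotProduct_add, add_dotProduct,
            dotProduct_smul, smul_dotProduct, smul_eq_mul, hsymA]
          ring
        rw [hexp] at hkey
        linarith
      · intro m hm
        simp only [add_dotProduct, smul_dotProduct, smul_eq_mul, hBvl]
        rw [hentry j m, Matrix.one_apply_ne (by exact fun hc => hm hc.symm)]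
        ring
      · simp only [mulVec_add, mulVec_smul, dotProduct_add, add_dotProduct,
          dotProduct_smul, smul_dotProduct, smul_eq_mul, hBvl, hBvr]
        rw [hentry j j, Matrix.one_apply_eq]
        ring
    refine ⟨(hj ⟨0, hr⟩).1, fun j => ?_⟩
    have := (hj j).2
    linarith
  rcases lt_or_eq_of_le hpert.1 with hq | hq
  · exact Or.inl hq
  right
  refine ⟨hq, ?_⟩
  intro w
  by_contra hw
  set cst := (B *ᵥ w) ⬝ᵥ (A *ᵥ v) with hcst
  set j₀ : Fin r := ⟨0, hr⟩ with hj₀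
  set u : Fin d → ℝ := B *ᵥ w - ∑ m, ((xc m ⬝ᵥ (B *ᵥ (B *ᵥ w))) • xc m) with hu
  have hsum_dot : ∀ y : Fin d → ℝ,
      (∑ m, ((xc m ⬝ᵥ (B *ᵥ (B *ᵥ w))) • xc m)) ⬝ᵥ y
        = ∑ m, (xc m ⬝ᵥ (B *ᵥ (B *ᵥ w))) * (xc m ⬝ᵥ y) := by
    intro y
    simp only [dotProduct, Finset.sum_apply, Pi.smul_apply, smul_eq_mul, Finset.sum_mul,
      Finset.mul_sum]
    rw [Finset.sum_comm]
    apply Finset.sum_congr rfl; intros; apply Finset.sum_congr rfl; intros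
    apply Finset.sum_congr rfl; intros; ring
  have huBx : ∀ m : Fin r, u ⬝ᵥ (B *ᵥ xc m) = 0 := by
    intro m
    rw [hu, sub_dotProduct, hsum_dot]
    have h1 : (B *ᵥ w) ⬝ᵥ (B *ᵥ xc m) = xc m ⬝ᵥ (B *ᵥ (B *ᵥ w)) := symm_dot hBs (B *ᵥ w) (xc m)
    have h2 : ∀ k : Fin r, (xc k ⬝ᵥ (B *ᵥ (B *ᵥ w))) * (xc k ⬝ᵥ (B *ᵥ xc m))
        = if k = m then xc m ⬝ᵥ (B *ᵥ (B *ᵥ w)) else 0 := by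
      intro k
      rw [hentry k m, Matrix.one_apply]
      by_cases hkm : k = m
      · subst hkm; simp
      · simp [hkm]
    rw [h1]
    rw [Finset.sum_congr rfl (fun k _ => h2 k), Finset.sum_ite_eq' Finset.univ m
      (fun _ => xc m ⬝ᵥ (B *ᵥ (B *ᵥ w)))]
    simp
  have hxBu : ∀ m : Fin r, xc m ⬝ᵥ (B *ᵥ u) = 0 := by
    intro m; rw [symm_dot hBs]; exact huBx m
  have huAv : u ⬝ᵥ (A *ᵥ v) = cst := by
    rw [hu, sub_dotProduct, hsum_dot]
    have : ∀ k : Fin r, (xc k ⬝ᵥ (B *ᵥ (B *ᵥ w))) * (xc k ⬝ᵥ (A *ᵥ v)) = 0 := by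
      intro k; rw [hpert.2 k, mul_zero]
    rw [Finset.sum_congr rfl (fun k _ => this k), Finset.sum_const_zero]
    simp [hcst]
  set β : ℝ := u ⬝ᵥ (B *ᵥ u) with hβ
  have hβnn : 0 ≤ β := hBpsd u
  set γ : ℝ := (Real.sqrt (1 + β))⁻¹ with hγ
  have h1β : (0:ℝ) < 1 + β := by linarith
  have hsq : Real.sqrt (1 + β) ^ 2 = 1 + β := Real.sq_sqrt (le_of_lt h1β)
  have hsqpos : 0 < Real.sqrt (1 + β) := Real.sqrt_pos.mpr h1β
  have hγpos : 0 < γ := inv_pos.mpr hsqpos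
  have hγsq : γ^2 * (1 + β) = 1 := by
    rw [hγ, ← hsq]
    field_simp
    rw [Real.sqrt_sq hsqpos.le]
  -- the new column as a function of t
  have hcontra : ∀ t : ℝ,
      ∑ m, xc m ⬝ᵥ (A *ᵥ xc m) - xc j₀ ⬝ᵥ (A *ᵥ xc j₀)
        + (γ • (xc j₀ + u) + t • v) ⬝ᵥ (A *ᵥ (γ • (xc j₀ + u) + t • v))
        ≤ ∑ m, xc m ⬝ᵥ (A *ᵥ xc m) := by
    intro t
    apply key j₀ (γ • (xc j₀ + u) + t • v)
    · intro m hm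
      simp only [add_dotProduct, smul_dotProduct, smul_eq_mul, hBvl]
      rw [hentry j₀ m, Matrix.one_apply_ne (by exact fun hc => hm hc.symm), huBx m]
      ring
    · simp only [mulVec_add, mulVec_smul, dotProduct_add, add_dotProduct,
        dotProduct_smul, smul_dotProduct, smul_eq_mul, hBvl, hBvr]
      rw [hentry j₀ j₀, Matrix.one_apply_eq, hxBu j₀, huBx j₀, ← hβ]
      nlinarith [hγsq]
  -- expand the objective value of the perturbed matrix and derive a contradiction
  set D : ℝ := (xc j₀ + u) ⬝ᵥ (A *ᵥ (xc j₀ + u)) with hD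
  set e : ℝ := xc j₀ ⬝ᵥ (A *ᵥ xc j₀) with he
  have hslope : (0:ℝ) < 2 * γ * |cst| := by
    have : 0 < |cst| := abs_pos.mpr hw
    positivity
  -- pick t achieving strictly larger objective
  set t₀ : ℝ := (e - γ^2 * D + 1) / (2 * γ * cst) with ht₀
  have hexp : (γ • (xc j₀ + u) + t₀ • v) ⬝ᵥ (A *ᵥ (γ • (xc j₀ + u) + t₀ • v))
      = γ^2 * D + t₀ * (2 * γ * cst) := by
    have h1 : (xc j₀ + u) ⬝ᵥ (A *ᵥ v) = cst := by
      rw [add_dotProduct, hpert.2 j₀, huAv, zero_add]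
    have h2 : v ⬝ᵥ (A *ᵥ (xc j₀ + u)) = cst := by
      rw [symm_dot hA, h1]
    have expand : ∀ (a b : Fin d → ℝ) (s tt : ℝ),
        (s • a + tt • b) ⬝ᵥ (A *ᵥ (s • a + tt • b))
          = s^2 * (a ⬝ᵥ (A *ᵥ a)) + s*tt*(a ⬝ᵥ (A *ᵥ b)) + tt*s*(b ⬝ᵥ (A *ᵥ a))
            + tt^2 * (b ⬝ᵥ (A *ᵥ b)) := by
      intros
      simp only [mulVec_add, mulVec_smul, dotProduct_add, add_dotProduct,
        dotProduct_smul, smul_dotProduct, smul_eq_mul]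
      ring
    rw [expand, h1, h2, hq, hD]
    ring
  have ht₀val : t₀ * (2 * γ * cst) = e - γ^2 * D + 1 := by
    rw [ht₀]
    field_simp
  have := hcontra t₀
  rw [hexp, ht₀val] at this
  linarith


theorem reverse_dir {d r : ℕ}
    (A B : Matrix (Fin d) (Fin d) ℝ) (hA : Aᵀ = A) (hAinv : IsUnit A.det)
    (hB : B.PosSemidef) (hrank : r ≤ B.rank)
    (hcond : ∀ v : Fin d → ℝ, B *ᵥ v = 0 →
        (v ⬝ᵥ (A *ᵥ v) < 0 ∨ (v ⬝ᵥ (A *ᵥ v) = 0 ∧ ∀ w : Fin d → ℝ, (B *ᵥ w) ⬝ᵥ (A *ᵥ v) = 0))) :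
    ∃ X : Matrix (Fin d) (Fin r) ℝ, Xᵀ * B * X = 1 ∧
      ∀ X' : Matrix (Fin d) (Fin r) ℝ, X'ᵀ * B * X' = 1 →
        -(Xᵀ * A * X).trace ≤ -(X'ᵀ * A * X').trace := by
  have hBs : Bᵀ = B := by simpa [Matrix.IsHermitian] using hB.1
  have hBpsd : ∀ x : Fin d → ℝ, (0:ℝ) ≤ x ⬝ᵥ (B *ᵥ x) := fun x => by simpa using hB.dotProduct_mulVec_nonneg x
  have hqle : ∀ v : Fin d → ℝ, B *ᵥ v = 0 → v ⬝ᵥ (A *ᵥ v) ≤ 0 := by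
    intro v hv
    rcases hcond v hv with h | h
    · exact le_of_lt h
    · exact le_of_eq h.1
  have expand : ∀ (M : Matrix (Fin d) (Fin d) ℝ) (a b : Fin d → ℝ) (s t : ℝ),
      (s • a + t • b) ⬝ᵥ (M *ᵥ (s • a + t • b))
        = s^2 * (a ⬝ᵥ (M *ᵥ a)) + s*t*(a ⬝ᵥ (M *ᵥ b)) + t*s*(b ⬝ᵥ (M *ᵥ a))
          + t^2 * (b ⬝ᵥ (M *ᵥ b)) := by
    intros
    simp only [mulVec_add, mulVec_smul, dotProduct_add, add_dotProduct,
      dotProduct_smul, smul_dotProduct, smul_eq_mul]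
    ring
  -- Step A : A is negative definite on the kernel of B
  have hnegdef : ∀ v : Fin d → ℝ, B *ᵥ v = 0 → v ≠ 0 → v ⬝ᵥ (A *ᵥ v) < 0 := by
    intro v hv hvne
    rcases hcond v hv with h | h
    · exact h
    exfalso
    obtain ⟨hq0, hAw⟩ := h
    -- every kernel vector pairs to zero with A v
    have hNker : ∀ n : Fin d → ℝ, B *ᵥ n = 0 → n ⬝ᵥ (A *ᵥ v) = 0 := by
      intro n hn
      have hquad : ∀ t : ℝ, t^2 * (n ⬝ᵥ (A *ᵥ n)) + t * (2 * (n ⬝ᵥ (A *ᵥ v))) ≤ 0 := by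
        intro t
        have hmem : B *ᵥ ((1:ℝ) • v + t • n) = 0 := by
          rw [mulVec_add, mulVec_smul, mulVec_smul, hv, hn]
          simp
        have hle := hqle _ hmem
        rw [expand] at hle
        have hsym : v ⬝ᵥ (A *ᵥ n) = n ⬝ᵥ (A *ᵥ v) := symm_dot hA v n
        rw [hsym, hq0] at hle
        nlinarith [hle]
      have := (quad_nonpos hquad).2
      linarith
    -- hence A v is orthogonal to everything
    have hall : ∀ x : Fin d → ℝ, x ⬝ᵥ (A *ᵥ v) = 0 := by
      intro x
      obtain ⟨y, z, ⟨w, hw⟩, hz, hxyz⟩ := range_ker_decomp hBs x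
      rw [hxyz, add_dotProduct]
      rw [← hw, hAw w, hNker z hz, add_zero]
    have hAv0 : A *ᵥ v = 0 := dotProduct_self_eq_zero.mp (hall (A *ᵥ v))
    -- invertibility gives v = 0
    apply hvne
    have : A⁻¹ *ᵥ (A *ᵥ v) = A⁻¹ *ᵥ 0 := by rw [hAv0]
    rwa [mulVec_mulVec, Matrix.nonsing_inv_mul A hAinv, one_mulVec, mulVec_zero] at this
  -- constants
  obtain ⟨cA, hcApos, hcA⟩ := exists_pos_lower (LinearMap.ker B.mulVecLin) (-A) (by
    intro v hv hvne
    have hv' : B *ᵥ v = 0 := hv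
    have := hnegdef v hv' hvne
    rw [neg_mulVec, dotProduct_neg]
    linarith)
  have hcA' : ∀ v : Fin d → ℝ, B *ᵥ v = 0 → v ⬝ᵥ (A *ᵥ v) ≤ -(cA * (v ⬝ᵥ v)) := by
    intro v hv
    have hmem : v ∈ LinearMap.ker B.mulVecLin := hv
    have := hcA v hmem
    rw [neg_mulVec, dotProduct_neg] at this
    linarith
  obtain ⟨cB, hcBpos, hcB⟩ := exists_pos_lower (LinearMap.range B.mulVecLin) B (by
    rintro v ⟨w, hw⟩ hvne
    rcases lt_or_eq_of_le (hBpsd v) with h | h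
    · exact h
    exfalso
    have hBv : B *ᵥ v = 0 := by
      apply (hB.dotProduct_mulVec_zero_iff v).mp
      simpa using h.symm
    have hvv : v ⬝ᵥ v = 0 := by
      have hw' : B *ᵥ w = v := hw
      calc v ⬝ᵥ v = v ⬝ᵥ (B *ᵥ w) := by rw [hw']
        _ = w ⬝ᵥ (B *ᵥ v) := symm_dot hBs v w
        _ = 0 := by rw [hBv, dotProduct_zero]
    exact hvne (dotProduct_self_eq_zero.mp hvv))
  obtain ⟨m₁, hm₁nn, hm₁⟩ := exists_upper A
  obtain ⟨m₂, hm₂nn, hm₂⟩ := exists_upper (Aᵀ * A)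
  have hm₂' : ∀ y : Fin d → ℝ, (A *ᵥ y) ⬝ᵥ (A *ᵥ y) ≤ m₂ * (y ⬝ᵥ y) := by
    intro y
    have h1 : y ⬝ᵥ ((Aᵀ * A) *ᵥ y) = (A *ᵥ y) ⬝ᵥ (A *ᵥ y) := by
      rw [← mulVec_mulVec, dotProduct_mulVec, ← mulVec_transpose, transpose_transpose]
    rw [← h1]
    exact hm₂ y
  -- the feasible starting point
  obtain ⟨X₀, hX₀⟩ := exists_feasible hB hrank
  set f : Matrix (Fin d) (Fin r) ℝ → ℝ := fun X => (Xᵀ * A * X).trace with hf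
  set f₀ : ℝ := f X₀ with hf₀
  set RY : ℝ := cB⁻¹ with hRY
  have hRYpos : 0 < RY := inv_pos.mpr hcBpos
  set CY : ℝ := m₁ * RY + (2/cA) * (m₂ * RY) with hCY
  set RZ : ℝ := max 0 ((2/cA) * ((r : ℝ) * CY - f₀)) with hRZ
  have hRZnn : 0 ≤ RZ := le_max_left _ _
  set R2 : ℝ := 2 * (RY + RZ) with hR2
  have hR2nn : 0 ≤ R2 := by positivity
  set K : Set (Matrix (Fin d) (Fin r) ℝ) := {X | Xᵀ * B * X = 1 ∧ f₀ ≤ f X} with hK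
  -- entry bound on K
  have hbound : ∀ X ∈ K, ∀ (i : Fin d) (j : Fin r), (X i j)^2 ≤ R2 := by
    rintro X ⟨hXfeas, hXval⟩ i j
    set x : Fin r → (Fin d → ℝ) := fun m k => X k m with hx
    have hent : ∀ m : Fin r, x m ⬝ᵥ (B *ᵥ x m) = 1 := by
      intro m
      have : (Xᵀ * B * X) m m = (1 : Matrix (Fin r) (Fin r) ℝ) m m := by rw [hXfeas]
      rw [entry_form] at this
      rw [this.trans (Matrix.one_apply_eq m)]
    choose y z hyR hzK hxyz using fun m => range_ker_decomp hBs (x m)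
    have hyB : ∀ m : Fin r, y m ⬝ᵥ (B *ᵥ y m) = 1 := by
      intro m
      have h1 := hent m
      rw [hxyz m] at h1
      rw [mulVec_add, dotProduct_add, add_dotProduct, add_dotProduct, hzK m] at h1
      rw [zero_dot_left hBs (hzK m) (y m)] at h1
      simpa using h1
    have hyy : ∀ m : Fin r, y m ⬝ᵥ y m ≤ RY := by
      intro m
      have h1 := hcB (y m) (by rcases hyR m with ⟨w, hw⟩; exact ⟨w, hw⟩)
      rw [hyB m] at h1
      have h2 : cB⁻¹ * (cB * (y m ⬝ᵥ y m)) ≤ cB⁻¹ * 1 :=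
        mul_le_mul_of_nonneg_left h1 (by positivity)
      rw [← mul_assoc, inv_mul_cancel₀ (ne_of_gt hcBpos), one_mul, mul_one] at h2
      exact h2
    have hyynn : ∀ m : Fin r, (0:ℝ) ≤ y m ⬝ᵥ y m :=
      fun m => Finset.sum_nonneg fun i _ => mul_self_nonneg (y m i)
    have hzznn : ∀ m : Fin r, (0:ℝ) ≤ z m ⬝ᵥ z m :=
      fun m => Finset.sum_nonneg fun i _ => mul_self_nonneg (z m i)
    -- per-column upper bound on the quadratic value
    have hcol : ∀ m : Fin r, x m ⬝ᵥ (A *ᵥ x m) ≤ CY - (cA/2) * (z m ⬝ᵥ z m) := by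
      intro m
      have hexp : x m ⬝ᵥ (A *ᵥ x m)
          = y m ⬝ᵥ (A *ᵥ y m) + 2 * ((A *ᵥ y m) ⬝ᵥ z m) + z m ⬝ᵥ (A *ᵥ z m) := by
        rw [hxyz m]
        have hsym : z m ⬝ᵥ (A *ᵥ y m) = y m ⬝ᵥ (A *ᵥ z m) := symm_dot hA (z m) (y m)
        have hAy : y m ⬝ᵥ (A *ᵥ z m) = (A *ᵥ y m) ⬝ᵥ z m := by
          rw [dotProduct_mulVec, ← mulVec_transpose, hA]
        simp only [mulVec_add, dotProduct_add, add_dotProduct, hsym, hAy]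
        ring
      have h1 : y m ⬝ᵥ (A *ᵥ y m) ≤ m₁ * RY := by
        calc y m ⬝ᵥ (A *ᵥ y m) ≤ m₁ * (y m ⬝ᵥ y m) := hm₁ (y m)
          _ ≤ m₁ * RY := mul_le_mul_of_nonneg_left (hyy m) hm₁nn
      have h2 : 2 * ((A *ᵥ y m) ⬝ᵥ z m)
          ≤ (2/cA) * (m₂ * RY) + (cA/2) * (z m ⬝ᵥ z m) := by
        have hy2 := young_dot cA hcApos (A *ᵥ y m) (z m)
        have h3 : (A *ᵥ y m) ⬝ᵥ (A *ᵥ y m) ≤ m₂ * RY := by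
          calc (A *ᵥ y m) ⬝ᵥ (A *ᵥ y m) ≤ m₂ * (y m ⬝ᵥ y m) := hm₂' (y m)
            _ ≤ m₂ * RY := mul_le_mul_of_nonneg_left (hyy m) hm₂nn
        have h4 : (2/cA) * ((A *ᵥ y m) ⬝ᵥ (A *ᵥ y m)) ≤ (2/cA) * (m₂ * RY) :=
          mul_le_mul_of_nonneg_left h3 (by positivity)
        linarith
      have h5 : z m ⬝ᵥ (A *ᵥ z m) ≤ -(cA * (z m ⬝ᵥ z m)) := hcA' (z m) (hzK m)
      rw [hexp, hCY]
      linarith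
    -- sum the column bounds
    have hsumz : (cA/2) * (∑ m, z m ⬝ᵥ z m) ≤ (r : ℝ) * CY - f₀ := by
      have hfX : f₀ ≤ ∑ m, x m ⬝ᵥ (A *ᵥ x m) := by
        rw [← trace_form]
        exact hXval
      have hsum : ∑ m, x m ⬝ᵥ (A *ᵥ x m) ≤ ∑ m : Fin r, (CY - (cA/2) * (z m ⬝ᵥ z m)) :=
        Finset.sum_le_sum fun m _ => hcol m
      have heq : ∑ m : Fin r, (CY - (cA/2) * (z m ⬝ᵥ z m))
          = (r : ℝ) * CY - (cA/2) * (∑ m, z m ⬝ᵥ z m) := by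
        rw [Finset.sum_sub_distrib, Finset.sum_const, Finset.card_univ, Fintype.card_fin]
        rw [← Finset.mul_sum]
        simp [nsmul_eq_mul]
      rw [heq] at hsum
      linarith
    have hzz : ∀ m : Fin r, z m ⬝ᵥ z m ≤ RZ := by
      intro m
      have h1 : z m ⬝ᵥ z m ≤ ∑ k, z k ⬝ᵥ z k :=
        Finset.single_le_sum (fun k _ => hzznn k) (Finset.mem_univ m)
      have h2 : (∑ k, z k ⬝ᵥ z k) ≤ (2/cA) * ((r : ℝ) * CY - f₀) := by
        have h3 : (2/cA) * ((cA/2) * (∑ m, z m ⬝ᵥ z m)) ≤ (2/cA) * ((r : ℝ) * CY - f₀) :=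
          mul_le_mul_of_nonneg_left hsumz (by positivity)
        have h4 : (2/cA) * ((cA/2) * (∑ m, z m ⬝ᵥ z m)) = ∑ m, z m ⬝ᵥ z m := by
          field_simp
        rw [h4] at h3
        exact h3
      calc z m ⬝ᵥ z m ≤ ∑ k, z k ⬝ᵥ z k := h1
        _ ≤ (2/cA) * ((r : ℝ) * CY - f₀) := h2
        _ ≤ RZ := le_max_right _ _
    -- entry bound
    have hXij : X i j = y j i + z j i := by
      have := hxyz j
      have h1 : x j i = y j i + z j i := by rw [this]; rfl
      exact h1
    rw [hXij, hR2]
    have hy1 : (y j i)^2 ≤ RY := le_trans (sq_le_dot (y j) i) (hyy j)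
    have hz1 : (z j i)^2 ≤ RZ := le_trans (sq_le_dot (z j) i) (hzz j)
    nlinarith [sq_nonneg (y j i - z j i)]
  -- compactness of K
  set C : ℝ := Real.sqrt R2 with hC
  have hCnn : 0 ≤ C := Real.sqrt_nonneg _
  have hC2 : C^2 = R2 := Real.sq_sqrt hR2nn
  have hIcc : IsCompact ((Set.univ.pi fun _ : Fin d => Set.univ.pi fun _ : Fin r =>
      Set.Icc (-C) C) : Set (Matrix (Fin d) (Fin r) ℝ)) :=
    isCompact_univ_pi fun _ => isCompact_univ_pi fun _ => isCompact_Icc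
  have hgcont : Continuous fun X : Matrix (Fin d) (Fin r) ℝ => Xᵀ * B * X :=
    ((continuous_id.matrix_transpose).matrix_mul continuous_const).matrix_mul continuous_id
  have hfcont : Continuous f :=
    (((continuous_id.matrix_transpose).matrix_mul continuous_const).matrix_mul
      continuous_id).matrix_trace
  have hKclosed : IsClosed K := by
    have : K = {X : Matrix (Fin d) (Fin r) ℝ | Xᵀ * B * X = 1}
        ∩ {X : Matrix (Fin d) (Fin r) ℝ | f₀ ≤ f X} := by
      ext X; simp [hK, Set.mem_setOf_eq, Set.mem_inter_iff]
    rw [this]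
    exact (isClosed_eq hgcont continuous_const).inter (isClosed_le continuous_const hfcont)
  have hKsub : K ⊆ ((Set.univ.pi fun _ : Fin d => Set.univ.pi fun _ : Fin r =>
      Set.Icc (-C) C) : Set (Matrix (Fin d) (Fin r) ℝ)) := by
    intro X hX
    refine Set.mem_univ_pi.mpr fun i => Set.mem_univ_pi.mpr fun j => ?_
    have h1 := hbound X hX i j
    rw [← hC2] at h1
    exact Set.mem_Icc.mpr ⟨by nlinarith [hCnn], by nlinarith [hCnn]⟩
  have hKcomp : IsCompact K := hIcc.of_isClosed_subset hKclosed hKsub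
  have hX₀K : X₀ ∈ K := ⟨hX₀, le_refl _⟩
  obtain ⟨Xs, hXsK, hmax⟩ := hKcomp.exists_isMaxOn ⟨X₀, hX₀K⟩ hfcont.continuousOn
  refine ⟨Xs, hXsK.1, ?_⟩
  intro X' hX'
  have hfmax : ∀ Y ∈ K, f Y ≤ f Xs := hmax
  by_cases hcase : f₀ ≤ f X'
  · have h1 : f X' ≤ f Xs := hfmax X' ⟨hX', hcase⟩
    simp only [hf] at h1 ⊢
    linarith
  · push_neg at hcase
    have h1 : f X₀ ≤ f Xs := hfmax X₀ hX₀K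
    have h2 : f X' ≤ f Xs := by
      rw [hf₀] at hcase
      linarith
    simp only [hf] at h2 ⊢
    linarith


/-- **Proposition A.1.** Let `A` be symmetric and invertible and `B`
symmetric positive semidefinite with `rank B ≥ r` (so `T_B ≠ ∅`).  The problem
`min_{X ∈ T_B} −tr(Xᵀ A X)` admits a minimizer if and only if every `v ∈ Null(B)`
satisfies either `vᵀ A v < 0`, or (`vᵀ A v = 0` and `uᵀ A v = 0` for every
`u ∈ Col(B)`). -/

theorem gev_minimizer_exists_iff
    (d r : ℕ) (hd : 1 ≤ d) (hr : 1 ≤ r) (hrd : r ≤ d)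
    (A B : Matrix (Fin d) (Fin d) ℝ) (hA : Aᵀ = A) (hAinv : IsUnit A.det)
    (hB : B.PosSemidef) (hrank : r ≤ B.rank) :
    (∃ X : Matrix (Fin d) (Fin r) ℝ, Xᵀ * B * X = 1 ∧
        ∀ X' : Matrix (Fin d) (Fin r) ℝ, X'ᵀ * B * X' = 1 →
          -(Xᵀ * A * X).trace ≤ -(X'ᵀ * A * X').trace) ↔
      ∀ v : Fin d → ℝ, B *ᵥ v = 0 →
        (v ⬝ᵥ (A *ᵥ v) < 0 ∨
          (v ⬝ᵥ (A *ᵥ v) = 0 ∧ ∀ w : Fin d → ℝ, (B *ᵥ w) ⬝ᵥ (A *ᵥ v) = 0)) := by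
  constructor
  · rintro ⟨X₀, hfeas, hopt⟩ v hv
    have hBs : Bᵀ = B := by simpa [Matrix.IsHermitian] using hB.1
    have hBpsd : ∀ x : Fin d → ℝ, (0:ℝ) ≤ x ⬝ᵥ (B *ᵥ x) := fun x => by simpa using hB.dotProduct_mulVec_nonneg x
    exact forward_dir hr A B hA hBs hBpsd X₀ hfeas hopt v hv
  · intro hcond
    exact reverse_dir A B hA hAinv hB hrank hcond
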